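/- Let A be a finite dimensional self-injective algebra over a field and P → M a projective resolution of a finitely generated A-module M by finitely generated projectives. Then P is a minimal complex (every homotopy equivalence P → P is an isomorphism) if and only if for every n ≥ 0 the map P_n → Coker(d_{n+1}) is a projective cover. -/

import Mathlib

open CategoryTheory

/-- A surjective linear map from a projective module whose kernel is superfluous,
i.e. a projective cover. -/
def IsProjectiveCover (A : Type) [Ring A] {P N : Type} [AddCommGroup P] [Module A P]
    [AddCommGroup N] [Module A N] (π : P →ₗ[A] N) : Prop :=
  Module.Projective A P ∧ Function.Surjective π ∧
    ∀ K : Submodule A P, K ⊔ LinearMap.ker π = ⊤ → K = ⊤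

section Radical

variable {R : Type*} [Ring R] {M N : Type*} [AddCommGroup M] [Module R M]
  [AddCommGroup N] [Module R N]

/-- The radical of a module: the infimum of all maximal submodules. -/
def modRad (R : Type*) [Ring R] (M : Type*) [AddCommGroup M] [Module R M] : Submodule R M :=
  sInf {L | IsCoatom L}

lemma coatomic_of_finite [Module.Finite R M] : IsCoatomic (Submodule R M) :=
  CompleteLattice.coatomic_of_top_compact ((Submodule.fg_iff_compact ⊤).mp Module.Finite.fg_top)

lemma le_modRad_of_superfluous {S : Submodule R M}
    (h : ∀ K : Submodule R M, K ⊔ S = ⊤ → K = ⊤) : S ≤ modRad R M := by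
  refine le_sInf fun L hL => ?_
  by_contra hnle
  have hlt : L < L ⊔ S :=
    lt_of_le_of_ne le_sup_left (fun he => hnle (le_sup_right.trans he.ge))
  exact hL.1 (h L (hL.2 _ hlt))

lemma superfluous_of_le_modRad [Module.Finite R M] {S : Submodule R M}
    (h : S ≤ modRad R M) : ∀ K : Submodule R M, K ⊔ S = ⊤ → K = ⊤ := by
  intro K hK
  by_contra hne
  obtain ⟨L, hL, hKL⟩ :=
    ((coatomic_of_finite (R := R) (M := M)).eq_top_or_exists_le_coatom K).resolve_left hne
  have hSL : S ≤ L := h.trans (sInf_le hL)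
  have : (⊤ : Submodule R M) ≤ L := by rw [← hK]; exact sup_le hKL hSL
  exact hL.1 (top_unique this)

lemma map_modRad_le (f : M →ₗ[R] N) : Submodule.map f (modRad R M) ≤ modRad R N := by
  refine le_sInf fun L hL => Submodule.map_le_iff_le_comap.mpr ?_
  by_cases htop : Submodule.comap f L = ⊤
  · rw [htop]; exact le_top
  · refine sInf_le ⟨htop, fun K hK => ?_⟩
    obtain ⟨x, hxK, hxL⟩ := SetLike.exists_of_lt hK
    have hfx : f x ∉ L := fun h => hxL (Submodule.mem_comap.mpr h)
    have hlt : L < L ⊔ Submodule.map f K := by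
      refine lt_of_le_of_ne le_sup_left fun he => hfx ?_
      rw [he]
      exact Submodule.mem_sup_right ⟨x, hxK, rfl⟩
    have htop2 : L ⊔ Submodule.map f K = ⊤ := hL.2 _ hlt
    rw [eq_top_iff]
    rintro y -
    have hy : f y ∈ L ⊔ Submodule.map f K := by rw [htop2]; trivial
    obtain ⟨l, hl, z, hz, hsum⟩ := Submodule.mem_sup.mp hy
    obtain ⟨w, hwK, rfl⟩ := hz
    have hmem : y - w ∈ Submodule.comap f L := by
      rw [Submodule.mem_comap, map_sub]
      have : f y - f w = l := by rw [← hsum]; abel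
      rw [this]; exact hl
    have : y - w ∈ K := hK.le hmem
    simpa using K.add_mem this hwK

end Radical

/-- Let `A` be a finite dimensional self-injective algebra over a field `k`
and `P → M` a projective resolution of a finitely generated `A`-module `M` by finitely
generated projectives.  Then `P` is a minimal complex (every homotopy equivalence
`P → P` is an isomorphism) iff for every `n ≥ 0` the canonical map
`P n → Coker (d (n+1))` is a projective cover. -/
theorem minimal_projective_resolution_iff_projective_covers
    (k A : Type) [Field k] [Ring A] [Algebra k A] [FiniteDimensional k A]
    (hselfinj : Module.Injective A A)
    (M : ModuleCat A) (hM : Module.Finite A M)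
    (P : ProjectiveResolution M)
    (hfg : ∀ n : ℕ, Module.Finite A (P.complex.X n)) :
    (∀ e : HomotopyEquiv P.complex P.complex, IsIso e.hom) ↔
      (∀ n : ℕ, IsProjectiveCover A
        (Submodule.mkQ (LinearMap.range (P.complex.d (n + 1) n).hom))) := by
  classical
  have hproj : ∀ n, Module.Projective A (P.complex.X n) := fun n =>
    (IsProjective.iff_projective _).mpr (P.projective n)
  constructor
  · -- minimal → projective covers
    intro hmin n
    refine ⟨hproj n, Submodule.mkQ_surjective _, ?_⟩
    intro K hK
    rw [Submodule.ker_mkQ] at hK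
    by_contra hKne
    haveI := hfg n
    obtain ⟨L, hL, hKL⟩ :=
      ((coatomic_of_finite (R := A) (M := P.complex.X n)).eq_top_or_exists_le_coatom K).resolve_left hKne
    have hdL : ¬ LinearMap.range (P.complex.d (n+1) n).hom ≤ L := fun hle =>
      hL.1 (top_unique (by rw [← hK]; exact sup_le hKL hle))
    have hsupL : L ⊔ LinearMap.range (P.complex.d (n+1) n).hom = ⊤ :=
      hL.2 _ (lt_of_le_of_ne le_sup_left fun he => hdL (le_sup_right.trans he.ge))
    have hqd : Function.Surjective
        (L.mkQ ∘ₗ (P.complex.d (n+1) n).hom) := by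
      intro y
      obtain ⟨x, rfl⟩ := L.mkQ_surjective y
      have hx : x ∈ L ⊔ LinearMap.range (P.complex.d (n+1) n).hom := by rw [hsupL]; trivial
      obtain ⟨l, hl, z, hz, rfl⟩ := Submodule.mem_sup.mp hx
      obtain ⟨w, rfl⟩ := hz
      refine ⟨w, ?_⟩
      rw [LinearMap.comp_apply, map_add]
      have : L.mkQ l = 0 := by
        rw [Submodule.mkQ_apply, Submodule.Quotient.mk_eq_zero]; exact hl
      rw [this, zero_add]
    haveI := hproj n
    obtain ⟨h', hh'⟩ := Module.projective_lifting_property _ L.mkQ hqd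
    -- build a null homotopic perturbation of the identity
    let hom : ∀ i j, (P.complex.X i ⟶ P.complex.X j) := fun i j =>
      if hij : i = n ∧ j = n + 1 then
        eqToHom (congrArg P.complex.X hij.1) ≫
          (-(ModuleCat.ofHom h' : P.complex.X n ⟶ P.complex.X (n+1))) ≫
            eqToHom (congrArg P.complex.X hij.2.symm)
      else 0
    have homzero : ∀ i j, ¬ (ComplexShape.down ℕ).Rel j i → hom i j = 0 := by
      intro i j hrel
      dsimp only [hom]
      rw [dif_neg]
      rintro ⟨rfl, rfl⟩
      exact hrel (by simp)
    set Nm := Homotopy.nullHomotopicMap hom with hNm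
    set f : P.complex ⟶ P.complex := 𝟙 P.complex + Nm with hfdef
    have hf : Homotopy f (𝟙 P.complex) :=
      ((Homotopy.refl (𝟙 P.complex)).add
        (Homotopy.nullHomotopy hom homzero)).trans (Homotopy.ofEq (add_zero _))
    let e : HomotopyEquiv P.complex P.complex :=
      { hom := f
        inv := 𝟙 P.complex
        homotopyHomInvId := (Homotopy.ofEq (Category.comp_id f)).trans hf
        homotopyInvHomId := (Homotopy.ofEq (Category.id_comp f)).trans hf }
    haveI : IsIso f := hmin e
    haveI : IsIso (f.f n) := by
      change IsIso ((HomologicalComplex.eval _ _ n).map f)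
      infer_instance
    have hsurj : Function.Surjective (f.f n) := by
      intro y
      refine ⟨inv (f.f n) y, ?_⟩
      exact DFunLike.congr_fun (congrArg ModuleCat.Hom.hom (IsIso.inv_hom_id (f.f n))) y
    have hNf : Nm.f n = hom n (n+1) ≫ P.complex.d (n+1) n := by
      rcases n with _ | m
      · exact Homotopy.nullHomotopicMap_f_of_not_rel_left
          (show (ComplexShape.down ℕ).Rel 1 0 by simp) (fun l => by simp) hom
      · rw [Homotopy.nullHomotopicMap_f
          (show (ComplexShape.down ℕ).Rel (m+2) (m+1) by simp)
          (show (ComplexShape.down ℕ).Rel (m+1) m by simp) hom]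
        have hz : hom m (m+1) = 0 := by
          dsimp only [hom]; rw [dif_neg]; rintro ⟨h1, -⟩; omega
        rw [hz]
        simp
    have homval : hom n (n+1) = -(ModuleCat.ofHom h' : P.complex.X n ⟶ P.complex.X (n+1)) := by
      dsimp only [hom]
      rw [dif_pos ⟨rfl, rfl⟩]
      simp
    have hrange : ∀ x, (f.f n) x ∈ L := by
      intro x
      have hfx : (f.f n) x = x + (Nm.f n) x := by
        rw [hfdef]
        rfl
      have hNx : (Nm.f n) x = P.complex.d (n+1) n (-(h' x)) := by
        rw [hNf, homval]
        rfl
      have hlift := DFunLike.congr_fun hh' x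
      rw [LinearMap.comp_apply, LinearMap.comp_apply] at hlift
      have : L.mkQ ((f.f n) x) = 0 := by
        rw [hfx, hNx, map_neg, map_add, map_neg, hlift]
        simp
      rwa [Submodule.mkQ_apply, Submodule.Quotient.mk_eq_zero] at this
    have : L = ⊤ := Submodule.eq_top_iff'.mpr fun y => by
      obtain ⟨x, rfl⟩ := hsurj y; exact hrange x
    exact hL.1 this
  · -- projective covers → minimal
    intro hcov e
    have hsup : ∀ m (K : Submodule A (P.complex.X m)),
        K ⊔ LinearMap.range (P.complex.d (m+1) m).hom = ⊤ → K = ⊤ := by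
      intro m K hK
      exact (hcov m).2.2 K (by rwa [Submodule.ker_mkQ])
    have hrad : ∀ m, LinearMap.range (P.complex.d (m+1) m).hom ≤ modRad A (P.complex.X m) :=
      fun m => le_modRad_of_superfluous (hsup m)
    haveI hNk : IsNoetherian k A := isNoetherian_of_isNoetherianRing_of_finite k A
    haveI hNA : IsNoetherianRing A :=
      isNoetherianRing_iff.mpr (isNoetherian_of_tower k hNk)
    haveI : ∀ m, IsNoetherian A (P.complex.X m) := fun m =>
      letI := hfg m; isNoetherian_of_isNoetherianRing_of_finite A _
    have key : ∀ (g : P.complex ⟶ P.complex), Homotopy g (𝟙 P.complex) →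
        ∀ m, Function.Bijective (g.f m) := by
      intro g H m
      haveI := hfg m
      have hcomm := H.comm m
      have hprev : ∀ x, prevD m H.hom x ∈ modRad A (P.complex.X m) := by
        intro x
        rw [prevD_eq H.hom (show (ComplexShape.down ℕ).Rel (m+1) m by simp)]
        exact hrad m ⟨H.hom m (m+1) x, rfl⟩
      have hnext : ∀ x, dNext m H.hom x ∈ modRad A (P.complex.X m) := by
        intro x
        rw [dNext_nat]
        cases m with
        | zero =>
          have h0 : P.complex.d 0 (0-1) = 0 := P.complex.shape _ _ (by simp)
          rw [h0, Limits.zero_comp]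
          exact Submodule.zero_mem _
        | succ i =>
          show H.hom i (i+1) (P.complex.d (i+1) i x) ∈ modRad A (P.complex.X (i+1))
          have hd : P.complex.d (i+1) i x ∈ modRad A (P.complex.X i) := hrad i ⟨x, rfl⟩
          exact map_modRad_le (H.hom i (i+1)).hom ⟨_, hd, rfl⟩
      have hsurj : Function.Surjective (g.f m) := by
        have hsupr : LinearMap.range (g.f m).hom ⊔ modRad A (P.complex.X m) = ⊤ := by
          rw [eq_top_iff]
          rintro x -
          have hx := DFunLike.congr_fun (congrArg ModuleCat.Hom.hom hcomm) x
          refine Submodule.mem_sup.mpr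
            ⟨g.f m x, ⟨x, rfl⟩,
              -(dNext m H.hom x) - (prevD m H.hom x), ?_, ?_⟩
          · exact Submodule.sub_mem _ (Submodule.neg_mem _ (hnext x)) (hprev x)
          · have hx' : g.f m x = dNext m H.hom x + prevD m H.hom x + x := hx
            rw [hx']
            abel
        have := superfluous_of_le_modRad (le_refl (modRad A (P.complex.X m))) _ hsupr
        exact LinearMap.range_eq_top.mp this
      have hinj : Function.Injective (g.f m) :=
        IsNoetherian.injective_of_surjective_endomorphism _ hsurj
      exact ⟨hinj, hsurj⟩
    have h1 := key _ e.homotopyHomInvId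
    have h2 := key _ e.homotopyInvHomId
    have hbij : ∀ m, Function.Bijective (e.hom.f m) := by
      intro m
      constructor
      · intro a b hab
        refine (h1 m).1 (show ((e.hom ≫ e.inv).f m) a = ((e.hom ≫ e.inv).f m) b from ?_)
        rw [HomologicalComplex.comp_f]
        exact congrArg (e.inv.f m) hab
      · intro y
        obtain ⟨x, hx⟩ := (h2 m).2 y
        refine ⟨e.inv.f m x, ?_⟩
        have hx' : ((e.inv ≫ e.hom).f m) x = y := hx
        rw [HomologicalComplex.comp_f] at hx'
        exact hx' 
    haveI : ∀ m, IsIso (e.hom.f m) := fun m => by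
      let eqv := LinearEquiv.ofBijective
        (e.hom.f m).hom (hbij m)
      exact ⟨(ModuleCat.ofHom eqv.symm.toLinearMap : P.complex.X m ⟶ P.complex.X m),
        ModuleCat.hom_ext (LinearMap.ext fun x => eqv.symm_apply_apply x),
        ModuleCat.hom_ext (LinearMap.ext fun x => eqv.apply_symm_apply x)⟩
    exact HomologicalComplex.Hom.isIso_of_components e.hom
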